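/- arXiv:2410.02113 — 5 statements merged into one kernel-verified Lean document; each statement's English description precedes it below -/
import Mathlib

section
/- Let A be an invertible n×n real matrix, B an n×m real matrix, and Δ > 0. Then the zero-order-hold input matrix (Δ•A)⁻¹ · (exp(Δ•A) - 1) · (Δ•B) agrees with the Euler input matrix Δ•B up to second order: ‖(Δ•A)⁻¹ · (exp(Δ•A) - 1) · (Δ•B) - Δ•B‖ ≤ (Δ^2 · ‖A‖ · ‖B‖ / 2) · exp(Δ·‖A‖). -/
open scoped Matrix.Norms.L2Operator

/-- The zero-order-hold input matrix `(Δ•A)⁻¹ (exp(Δ•A) - 1) (Δ•B)` agrees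
with the Euler input matrix `Δ•B` up to second order, in the operator norms induced by the
Euclidean norms. -/
theorem zoh_input_matrix_close_to_euler (n m : ℕ) (A : Matrix (Fin n) (Fin n) ℝ)
    (hA : IsUnit A) (B : Matrix (Fin n) (Fin m) ℝ) (Δ : ℝ) (hΔ : 0 < Δ) :
    ‖(Δ • A)⁻¹ * (NormedSpace.exp (Δ • A) - 1) * (Δ • B) - Δ • B‖ ≤
      Δ ^ 2 * ‖A‖ * ‖B‖ / 2 * Real.exp (Δ * ‖A‖) := by
  set x : Matrix (Fin n) (Fin n) ℝ := Δ • A with hxdef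
  have hdet : IsUnit x.det := by
    rw [hxdef, Matrix.det_smul, Fintype.card_fin]
    exact ((isUnit_iff_ne_zero.mpr hΔ.ne').pow n).mul
      ((Matrix.isUnit_iff_isUnit_det A).mp hA)
  -- summability facts
  have hnorm : Summable fun k : ℕ => ‖((k.factorial : ℝ))⁻¹ • x ^ k‖ :=
    NormedSpace.norm_expSeries_summable' x
  have hS1 : Summable (fun k : ℕ => (((k + 1).factorial : ℝ))⁻¹ • x ^ k) := by
    apply Summable.of_norm_bounded hnorm
    intro k
    rw [norm_smul, norm_smul, norm_inv, norm_inv, Real.norm_natCast, Real.norm_natCast]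
    have h1 : ((((k + 1).factorial : ℝ))⁻¹) ≤ (((k.factorial : ℝ))⁻¹) := by
      apply inv_anti₀
      · exact_mod_cast Nat.factorial_pos k
      · exact_mod_cast Nat.factorial_le (Nat.le_add_right k 1)
    exact mul_le_mul_of_nonneg_right h1 (norm_nonneg _)
  set S : Matrix (Fin n) (Fin n) ℝ := ∑' k : ℕ, (((k + 1).factorial : ℝ))⁻¹ • x ^ k with hSdef
  -- x * S = exp x - 1
  have hxS : x * S = NormedSpace.exp x - 1 := by
    simp only [NormedSpace.exp_eq_tsum ℝ]
    rw [Summable.tsum_eq_zero_add (NormedSpace.expSeries_summable' (𝕂 := ℝ) x)]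
    simp only [Nat.factorial_zero, Nat.cast_one, inv_one, pow_zero, one_smul]
    rw [add_sub_cancel_left, hSdef, ← hS1.tsum_mul_left x]
    congr 1
    ext k
    rw [mul_smul_comm, pow_succ']
  -- S - 1 = tail sum
  have hS_split : S - 1 = ∑' k : ℕ, (((k + 1 + 1).factorial : ℝ))⁻¹ • x ^ (k + 1) := by
    rw [hSdef, Summable.tsum_eq_zero_add hS1]
    norm_num
  -- norm bound on the tail
  have hexp : HasSum (fun k : ℕ => ‖x‖ / 2 * (‖x‖ ^ k / k.factorial)) (‖x‖ / 2 * Real.exp ‖x‖) := by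
    have hb : Summable (fun k : ℕ => ‖x‖ ^ k / k.factorial) :=
      Real.summable_pow_div_factorial ‖x‖
    have : ∑' k : ℕ, ‖x‖ ^ k / (k.factorial : ℝ) = Real.exp ‖x‖ := by
      rw [Real.exp_eq_exp_ℝ, NormedSpace.exp_eq_tsum_div]
    exact (this ▸ hb.hasSum).mul_left _
  have htail : ‖S - 1‖ ≤ ‖x‖ / 2 * Real.exp ‖x‖ := by
    rw [hS_split]
    apply tsum_of_norm_bounded hexp
    intro k
    rw [norm_smul, norm_inv, Real.norm_natCast]
    have hnat : 2 * k.factorial ≤ (k + 1 + 1).factorial := by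
      rw [Nat.factorial_succ, Nat.factorial_succ, ← mul_assoc]
      exact Nat.mul_le_mul_right _ (by nlinarith)
    calc ((((k + 1 + 1).factorial : ℝ))⁻¹) * ‖x ^ (k + 1)‖
        ≤ ((((k + 1 + 1).factorial : ℝ))⁻¹) * ‖x‖ ^ (k + 1) := by
          gcongr
          exact norm_pow_le' x (Nat.succ_pos k)
      _ ≤ (2 * k.factorial : ℝ)⁻¹ * ‖x‖ ^ (k + 1) := by
          apply mul_le_mul_of_nonneg_right _ (by positivity)
          apply inv_anti₀ (by positivity)
          exact_mod_cast hnat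
      _ = ‖x‖ / 2 * (‖x‖ ^ k / k.factorial) := by
          rw [pow_succ]
          field_simp
  -- rewrite the main expression
  have hmain : x⁻¹ * (NormedSpace.exp x - 1) * (Δ • B) - Δ • B = (S - 1) * (Δ • B) := by
    rw [← hxS, ← mul_assoc, Matrix.nonsing_inv_mul x hdet, one_mul, Matrix.sub_mul, Matrix.one_mul]
  rw [hmain]
  have hnx : ‖x‖ = Δ * ‖A‖ := by
    rw [hxdef, norm_smul, Real.norm_of_nonneg hΔ.le]
  have hnB : ‖Δ • B‖ = Δ * ‖B‖ := by
    rw [norm_smul, Real.norm_of_nonneg hΔ.le]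
  calc ‖(S - 1) * (Δ • B)‖ ≤ ‖S - 1‖ * ‖Δ • B‖ := Matrix.l2_opNorm_mul _ _
    _ ≤ (‖x‖ / 2 * Real.exp ‖x‖) * ‖Δ • B‖ := by
        gcongr
    _ = Δ ^ 2 * ‖A‖ * ‖B‖ / 2 * Real.exp (Δ * ‖A‖) := by
        rw [hnx, hnB]; ring
end

section
/- (Proposition 1, quantitative form.) Let A be an invertible n×n real matrix, B an n×m real matrix, h ∈ ℝ^n, u ∈ ℝ^m, and Δ > 0. Then the zero-order-hold update and the Euler update of the state-space model h' = A h + B u differ by at most second order in Δ: ‖exp(Δ•A)·h + ((Δ•A)⁻¹ · (exp(Δ•A) - 1) · (Δ•B))·u - (h + Δ•(A·h + B·u))‖ ≤ (Δ^2 / 2) · exp(Δ·‖A‖) · (‖A‖^2·‖h‖ + ‖A‖·‖B‖·‖u‖), where M·v denotes the matrix-vector product and ‖·‖ is the operator norm on matrices and the Euclidean norm on vectors. -/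
set_option maxHeartbeats 1000000

open scoped Matrix.Norms.L2Operator Nat

/-- Helper: bound on applying `toEuclideanLin`. -/
lemma toEuclideanLin_apply_le {p q : ℕ} (M : Matrix (Fin p) (Fin q) ℝ)
    (x : EuclideanSpace ℝ (Fin q)) :
    ‖Matrix.toEuclideanLin M x‖ ≤ ‖M‖ * ‖x‖ :=
  (Matrix.toEuclideanLin.trans LinearMap.toContinuousLinearMap M).le_opNorm x

lemma matrix_norm_one_le {p : ℕ} : ‖(1 : Matrix (Fin p) (Fin p) ℝ)‖ ≤ 1 := by
  rw [Matrix.cstar_norm_def, map_one]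
  exact ContinuousLinearMap.norm_id_le

lemma matrix_norm_pow_le {p : ℕ} (M : Matrix (Fin p) (Fin p) ℝ) (k : ℕ) :
    ‖M ^ k‖ ≤ ‖M‖ ^ k := by
  induction k with
  | zero => simpa using matrix_norm_one_le
  | succ k ih =>
    rw [pow_succ, pow_succ]
    calc ‖M ^ k * M‖ ≤ ‖M ^ k‖ * ‖M‖ := norm_mul_le _ _
      _ ≤ ‖M‖ ^ k * ‖M‖ := mul_le_mul_of_nonneg_right ih (norm_nonneg _)

lemma fact_cast_bound (k : ℕ) : (((k + 2)! : ℝ))⁻¹ ≤ (1 / 2) * ((k ! : ℝ))⁻¹ := by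
  rw [one_div, ← mul_inv]
  apply inv_anti₀ (by positivity)
  have h2 : (k + 2)! = (k + 2) * ((k + 1) * k !) := rfl
  rw [h2]
  have hf : (1 : ℝ) ≤ (k ! : ℝ) := by exact_mod_cast Nat.one_le_iff_ne_zero.mpr k.factorial_ne_zero
  have hk : (0 : ℝ) ≤ (k : ℝ) := Nat.cast_nonneg k
  have hf0 : (0 : ℝ) ≤ (k ! : ℝ) := le_trans zero_le_one hf
  push_cast
  nlinarith [mul_nonneg hk hf0, mul_nonneg (mul_nonneg hk hk) hf0]

open NormedSpace in
lemma remainder_summable {p : ℕ} (M : Matrix (Fin p) (Fin p) ℝ) :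
    Summable fun k : ℕ => (((k + 2)! : ℝ))⁻¹ • M ^ k := by
  apply Summable.of_norm_bounded (Real.summable_pow_div_factorial ‖M‖)
  intro k
  rw [norm_smul, Real.norm_eq_abs, abs_of_nonneg (by positivity), div_eq_mul_inv,
    mul_comm (‖M‖ ^ k)]
  apply mul_le_mul _ (matrix_norm_pow_le M k) (norm_nonneg _) (by positivity)
  apply inv_anti₀ (by positivity)
  exact_mod_cast Nat.factorial_le (by omega)

open NormedSpace in
/-- Second-order Taylor expansion of the matrix exponential. -/
lemma exp_eq_remainder {p : ℕ} (M : Matrix (Fin p) (Fin p) ℝ) :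
    exp M = 1 + M + M ^ 2 * ∑' k : ℕ, (((k + 2)! : ℝ))⁻¹ • M ^ k := by
  have hs : Summable fun n : ℕ => ((n ! : ℝ))⁻¹ • M ^ n := expSeries_summable' (𝕂 := ℝ) M
  have h0 : exp M = ∑' n : ℕ, ((n ! : ℝ))⁻¹ • M ^ n := by rw [exp_eq_tsum ℝ]
  rw [h0, hs.tsum_eq_zero_add, Summable.tsum_eq_zero_add ((summable_nat_add_iff 1).mpr hs)]
  have hshift : ∀ k : ℕ, (((k + 1 + 1)! : ℝ))⁻¹ • M ^ (k + 1 + 1)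
      = M ^ 2 * ((((k + 2)! : ℝ))⁻¹ • M ^ k) := by
    intro k
    rw [mul_smul_comm, show k + 1 + 1 = 2 + k by omega, pow_add,
      show (((2 + k)! : ℝ)) = (((k + 2)! : ℝ)) by rw [Nat.add_comm]]
  simp only [hshift]
  rw [Summable.tsum_mul_left _ (remainder_summable M)]
  simp [Nat.factorial]
  abel

open NormedSpace in
lemma remainder_norm_le {p : ℕ} (M : Matrix (Fin p) (Fin p) ℝ) :
    ‖∑' k : ℕ, (((k + 2)! : ℝ))⁻¹ • M ^ k‖ ≤ Real.exp ‖M‖ / 2 := by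
  have hb : ∀ k : ℕ, ‖(((k + 2)! : ℝ))⁻¹ • M ^ k‖ ≤ (1 / 2) * (((k ! : ℝ))⁻¹ * ‖M‖ ^ k) := by
    intro k
    rw [norm_smul, Real.norm_eq_abs, abs_of_nonneg (by positivity)]
    calc (((k + 2)! : ℝ))⁻¹ * ‖M ^ k‖ ≤ ((1 / 2) * ((k ! : ℝ))⁻¹) * ‖M‖ ^ k :=
          mul_le_mul (fact_cast_bound k) (matrix_norm_pow_le M k) (norm_nonneg _) (by positivity)
      _ = (1 / 2) * (((k ! : ℝ))⁻¹ * ‖M‖ ^ k) := by ring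
  have hsum : Summable fun k : ℕ => (1 / 2) * (((k ! : ℝ))⁻¹ * ‖M‖ ^ k) := by
    apply Summable.mul_left
    have := Real.summable_pow_div_factorial ‖M‖
    simpa [div_eq_mul_inv, mul_comm] using this
  have hnsum : Summable fun k : ℕ => ‖(((k + 2)! : ℝ))⁻¹ • M ^ k‖ :=
    Summable.of_nonneg_of_le (fun k => norm_nonneg _) hb hsum
  calc ‖∑' k : ℕ, (((k + 2)! : ℝ))⁻¹ • M ^ k‖
      ≤ ∑' k : ℕ, ‖(((k + 2)! : ℝ))⁻¹ • M ^ k‖ := norm_tsum_le_tsum_norm hnsum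
    _ ≤ ∑' k : ℕ, (1 / 2) * (((k ! : ℝ))⁻¹ * ‖M‖ ^ k) := Summable.tsum_le_tsum hb hnsum hsum
    _ = Real.exp ‖M‖ / 2 := by
        rw [tsum_mul_left, Real.exp_eq_exp_ℝ, exp_eq_tsum ℝ]
        simp only [smul_eq_mul]
        ring

/-- **Proposition 1, quantitative form.** The zero-order-hold update and the
Euler update of the state-space model `h' = A h + B u` differ by at most second order in `Δ`.
Matrix–vector products are taken via `Matrix.toEuclideanLin`, so that vectors carry the
Euclidean norm and matrices the induced operator norm. -/
theorem zoh_update_close_to_euler_update (n m : ℕ) (A : Matrix (Fin n) (Fin n) ℝ)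
    (hA : IsUnit A) (B : Matrix (Fin n) (Fin m) ℝ) (h : EuclideanSpace ℝ (Fin n))
    (u : EuclideanSpace ℝ (Fin m)) (Δ : ℝ) (hΔ : 0 < Δ) :
    ‖Matrix.toEuclideanLin (NormedSpace.exp (Δ • A)) h +
        Matrix.toEuclideanLin ((Δ • A)⁻¹ * (NormedSpace.exp (Δ • A) - 1) * (Δ • B)) u -
        (h + Δ • (Matrix.toEuclideanLin A h + Matrix.toEuclideanLin B u))‖ ≤
      Δ ^ 2 / 2 * Real.exp (Δ * ‖A‖) * (‖A‖ ^ 2 * ‖h‖ + ‖A‖ * ‖B‖ * ‖u‖) := by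
  set M := Δ • A with hM
  set G := ∑' k : ℕ, (((k + 2)! : ℝ))⁻¹ • M ^ k with hG
  -- invertibility of M
  have hMunit : IsUnit M := by
    refine (Matrix.isUnit_iff_isUnit_det _).mpr ?_
    rw [hM, Matrix.det_smul, Fintype.card_fin]
    exact (isUnit_iff_ne_zero.mpr (pow_ne_zero n hΔ.ne')).mul
      ((Matrix.isUnit_iff_isUnit_det A).mp hA)
  have hMinv : M⁻¹ * M = 1 := Matrix.nonsing_inv_mul M ((Matrix.isUnit_iff_isUnit_det M).mp hMunit)
  have key1 : NormedSpace.exp M = 1 + M + M ^ 2 * G := exp_eq_remainder M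
  -- the second matrix simplifies
  have key2 : M⁻¹ * (NormedSpace.exp M - 1) * (Δ • B) = Δ • B + (M * G) * (Δ • B) := by
    have hfac : NormedSpace.exp M - 1 = M * (1 + M * G) := by
      rw [key1]; noncomm_ring
    rw [hfac, ← mul_assoc M⁻¹ M, hMinv, one_mul]
    rw [Matrix.add_mul, Matrix.one_mul]
  -- rewrite the vector expression
  have hvec : Matrix.toEuclideanLin (NormedSpace.exp M) h +
        Matrix.toEuclideanLin (M⁻¹ * (NormedSpace.exp M - 1) * (Δ • B)) u -
        (h + Δ • (Matrix.toEuclideanLin A h + Matrix.toEuclideanLin B u)) =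
      Matrix.toEuclideanLin (M ^ 2 * G) h + Matrix.toEuclideanLin ((M * G) * (Δ • B)) u := by
    rw [key2, key1]
    have h1 : Matrix.toEuclideanLin (1 : Matrix (Fin n) (Fin n) ℝ) h = h := by
      simp [Matrix.toEuclideanLin_apply, Matrix.one_mulVec]
    have hMA : Matrix.toEuclideanLin M h = Δ • Matrix.toEuclideanLin A h := by
      rw [hM, map_smul]; rfl
    have hDB : Matrix.toEuclideanLin (Δ • B) u = Δ • Matrix.toEuclideanLin B u := by
      rw [map_smul]; rfl
    simp only [map_add, LinearMap.add_apply, h1, hMA, hDB, smul_add]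
    abel
  rw [hvec]
  -- norm estimates
  have hnormM : ‖M‖ = Δ * ‖A‖ := by
    rw [hM, norm_smul, Real.norm_eq_abs, abs_of_pos hΔ]
  have hnormDB : ‖(Δ • B)‖ = Δ * ‖B‖ := by
    rw [norm_smul, Real.norm_eq_abs, abs_of_pos hΔ]
  have hGle : ‖G‖ ≤ Real.exp (Δ * ‖A‖) / 2 := by
    rw [← hnormM]; exact remainder_norm_le M
  have hGnn : (0:ℝ) ≤ ‖G‖ := norm_nonneg _
  have hterm1 : ‖Matrix.toEuclideanLin (M ^ 2 * G) h‖ ≤ (‖M‖ ^ 2 * ‖G‖) * ‖h‖ := by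
    calc ‖Matrix.toEuclideanLin (M ^ 2 * G) h‖ ≤ ‖M ^ 2 * G‖ * ‖h‖ := toEuclideanLin_apply_le _ _
      _ ≤ (‖M ^ 2‖ * ‖G‖) * ‖h‖ :=
          mul_le_mul_of_nonneg_right (norm_mul_le _ _) (norm_nonneg _)
      _ ≤ (‖M‖ ^ 2 * ‖G‖) * ‖h‖ := by
          have := matrix_norm_pow_le M 2
          gcongr
  have hterm2 : ‖Matrix.toEuclideanLin ((M * G) * (Δ • B)) u‖ ≤
      ((‖M‖ * ‖G‖) * (Δ * ‖B‖)) * ‖u‖ := by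
    calc ‖Matrix.toEuclideanLin ((M * G) * (Δ • B)) u‖ ≤ ‖(M * G) * (Δ • B)‖ * ‖u‖ :=
          toEuclideanLin_apply_le _ _
      _ ≤ (‖M * G‖ * ‖(Δ • B)‖) * ‖u‖ :=
          mul_le_mul_of_nonneg_right (Matrix.l2_opNorm_mul _ _) (norm_nonneg _)
      _ ≤ ((‖M‖ * ‖G‖) * (Δ * ‖B‖)) * ‖u‖ := by
          rw [hnormDB]
          exact mul_le_mul_of_nonneg_right
            (mul_le_mul_of_nonneg_right (norm_mul_le _ _) (by positivity)) (norm_nonneg _)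
  calc ‖Matrix.toEuclideanLin (M ^ 2 * G) h + Matrix.toEuclideanLin ((M * G) * (Δ • B)) u‖
      ≤ ‖Matrix.toEuclideanLin (M ^ 2 * G) h‖ + ‖Matrix.toEuclideanLin ((M * G) * (Δ • B)) u‖ :=
        norm_add_le _ _
    _ ≤ (‖M‖ ^ 2 * ‖G‖) * ‖h‖ + ((‖M‖ * ‖G‖) * (Δ * ‖B‖)) * ‖u‖ := add_le_add hterm1 hterm2
    _ ≤ (‖M‖ ^ 2 * (Real.exp (Δ * ‖A‖) / 2)) * ‖h‖ +
          ((‖M‖ * (Real.exp (Δ * ‖A‖) / 2)) * (Δ * ‖B‖)) * ‖u‖ := by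
        gcongr <;> positivity
    _ = Δ ^ 2 / 2 * Real.exp (Δ * ‖A‖) * (‖A‖ ^ 2 * ‖h‖ + ‖A‖ * ‖B‖ * ‖u‖) := by
        rw [hnormM]; ring
end

section
/- For every n×n real matrix A and every Δ ∈ ℝ, the integrated matrix exponential satisfies (∫ s in 0..Δ, exp(s•A)) * A = exp(Δ•A) - 1, where the integral is the (componentwise) interval integral of the matrix-valued function s ↦ exp(s•A), exp is the matrix exponential, and 1 is the identity matrix. -/
open scoped Matrix.Norms.L2Operator

/-- The integrated matrix exponential satisfies
`(∫ s in 0..Δ, exp (s • A)) * A = exp (Δ • A) - 1`. -/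
theorem integral_exp_smul_mul_eq (n : ℕ) (A : Matrix (Fin n) (Fin n) ℝ) (Δ : ℝ) :
    (∫ s in (0 : ℝ)..Δ, NormedSpace.exp (s • A)) * A = NormedSpace.exp (Δ • A) - 1 := by
  have hcont : Continuous fun s : ℝ => NormedSpace.exp (s • A) :=
    by letI : NormedAlgebra ℚ (Matrix (Fin n) (Fin n) ℝ) := .restrictScalars ℚ ℝ _
       exact (NormedSpace.exp_continuous).comp (continuous_id.smul continuous_const)
  have hderiv : ∀ s ∈ Set.uIcc (0:ℝ) Δ,
      HasDerivAt (fun u : ℝ => NormedSpace.exp (u • A)) (NormedSpace.exp (s • A) * A) s :=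
    fun s _ => hasDerivAt_exp_smul_const A s
  have hint : IntervalIntegrable (fun s : ℝ => NormedSpace.exp (s • A) * A)
      MeasureTheory.volume 0 Δ :=
    ((hcont.mul continuous_const).intervalIntegrable _ _)
  have h1 : (∫ s in (0:ℝ)..Δ, NormedSpace.exp (s • A) * A)
      = NormedSpace.exp (Δ • A) - NormedSpace.exp ((0:ℝ) • A) :=
    intervalIntegral.integral_eq_sub_of_hasDerivAt hderiv hint
  have h2 : (∫ s in (0:ℝ)..Δ, NormedSpace.exp (s • A) * A)
      = (∫ s in (0:ℝ)..Δ, NormedSpace.exp (s • A)) * A := by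
    have := ContinuousLinearMap.intervalIntegral_comp_comm ((ContinuousLinearMap.mul ℝ (Matrix (Fin n) (Fin n) ℝ)).flip A)
      (hcont.intervalIntegrable (μ := MeasureTheory.volume) 0 Δ)
    simpa using this
  rw [← h2, h1, zero_smul, NormedSpace.exp_zero]
end

section
/- For every invertible n×n real matrix A and every Δ ∈ ℝ, the integrated matrix exponential has the closed form ∫ s in 0..Δ, exp(s•A) = A⁻¹ * (exp(Δ•A) - 1), where the integral is the interval integral of the matrix-valued function s ↦ exp(s•A), exp is the matrix exponential, and 1 is the identity matrix. -/
open scoped Matrix.Norms.L2Operator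

/-- For invertible `A`, the integrated matrix exponential has the closed form
`∫ s in 0..Δ, exp (s • A) = A⁻¹ * (exp (Δ • A) - 1)`. -/
theorem integral_exp_smul_eq_inv_mul (n : ℕ) (A : Matrix (Fin n) (Fin n) ℝ) (hA : IsUnit A)
    (Δ : ℝ) :
    (∫ s in (0 : ℝ)..Δ, NormedSpace.exp (s • A)) = A⁻¹ * (NormedSpace.exp (Δ • A) - 1) := by
  have hinv : A⁻¹ * A = 1 := Matrix.nonsing_inv_mul A (Matrix.isUnit_iff_isUnit_det A |>.mp hA)
  have hderiv : ∀ s ∈ Set.uIcc (0:ℝ) Δ,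
      HasDerivAt (fun u : ℝ => A⁻¹ * NormedSpace.exp (u • A))
        (NormedSpace.exp (s • A)) s := by
    intro s _
    have h := (hasDerivAt_exp_smul_const' (𝕂 := ℝ) A s).const_mul A⁻¹
    simpa [← mul_assoc, hinv] using h
  have hcont : IntervalIntegrable (fun s : ℝ => NormedSpace.exp (s • A))
      MeasureTheory.volume 0 Δ := by
    apply Continuous.intervalIntegrable
    exact continuous_iff_continuousAt.2 fun s => (hasDerivAt_exp_smul_const' (𝕂 := ℝ) A s).continuousAt
  have := intervalIntegral.integral_eq_sub_of_hasDerivAt hderiv hcont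
  rw [this]
  simp [mul_sub]
end

section
/- Let A be an invertible n×n real matrix, B an n×m real matrix, u ∈ ℝ^m, and h₀ ∈ ℝ^n. Suppose h : ℝ → ℝ^n satisfies h(0) = h₀ and, for every t ∈ ℝ, h has derivative A·h(t) + B·u at t. Then for every Δ ∈ ℝ, h(Δ) = exp(Δ•A)·h₀ + (A⁻¹ * (exp(Δ•A) - 1) * B)·u, where M·v denotes matrix-vector product, exp is the matrix exponential, and 1 is the identity matrix. -/
open scoped Matrix.Norms.L2Operator

open NormedSpace

lemma toEuclideanLin_mul_apply' {n m : ℕ} (M : Matrix (Fin n) (Fin n) ℝ)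
    (N : Matrix (Fin n) (Fin m) ℝ) (v : EuclideanSpace ℝ (Fin m)) :
    Matrix.toEuclideanLin (M * N) v = Matrix.toEuclideanLin M (Matrix.toEuclideanLin N v) := by
  simp [Matrix.toEuclideanLin_apply, Matrix.mulVec_mulVec]

lemma toEuclideanCLM_apply_eq {n : ℕ} (M : Matrix (Fin n) (Fin n) ℝ)
    (v : EuclideanSpace ℝ (Fin n)) :
    Matrix.toEuclideanCLM (𝕜 := ℝ) M v = Matrix.toEuclideanLin M v := rfl

/-- Solutions of the linear ODE `w' = 𝒜 w` are given by the exponential. -/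
lemma linear_ode_sol {E : Type*} [NormedAddCommGroup E] [NormedSpace ℝ E] [CompleteSpace E]
    (𝒜 : E →L[ℝ] E) (w : ℝ → E) (hw : ∀ t, HasDerivAt w (𝒜 (w t)) t) (Δ : ℝ) :
    w Δ = exp (Δ • 𝒜) (w 0) := by
  set φ : ℝ → E := fun t => exp (t • (-𝒜)) (w t) with hφ
  have hφ' : ∀ t, HasDerivAt φ 0 t := by
    intro t
    have hexp : HasDerivAt (fun s : ℝ => exp (s • (-𝒜))) ((-𝒜) * exp (t • (-𝒜))) t :=
      hasDerivAt_exp_smul_const' (-𝒜) t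
    have hd := hexp.clm_apply (hw t)
    have hcomm0 : Commute (t • (-𝒜)) 𝒜 := by
      show _ * _ = _ * _
      ext v
      simp [ContinuousLinearMap.mul_apply, map_smul]
    have hcomm : Commute (exp (t • (-𝒜))) 𝒜 := hcomm0.exp_left
    have hzero : ((-𝒜) * exp (t • (-𝒜))) (w t) + exp (t • (-𝒜)) (𝒜 (w t)) = 0 := by
      rw [← ContinuousLinearMap.mul_apply (exp (t • (-𝒜))) 𝒜, hcomm.eq]
      simp only [ContinuousLinearMap.mul_apply, ContinuousLinearMap.neg_apply]
      simp
    rw [hzero] at hd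
    exact hd
  have hconst : φ Δ = φ 0 :=
    is_const_of_deriv_eq_zero (fun t => (hφ' t).differentiableAt) (fun t => (hφ' t).deriv) Δ 0
  have hφ0 : φ 0 = w 0 := by
    have h4 : ((0 : ℝ) • (-𝒜)) = 0 := zero_smul ℝ _
    have h5 : φ 0 = exp ((0 : ℝ) • (-𝒜)) (w 0) := rfl
    rw [h5, h4, exp_zero, ContinuousLinearMap.one_apply]
  have hinv : exp (Δ • 𝒜) * exp (Δ • (-𝒜)) = 1 := by
    have hcomm1 : Commute (Δ • 𝒜) (Δ • (-𝒜)) := by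
      show _ * _ = _ * _
      ext v
      simp [ContinuousLinearMap.mul_apply, map_smul]
    let +nondep : NormedAlgebra ℚ (E →L[ℝ] E) := .restrictScalars ℚ ℝ _
    rw [← exp_add_of_commute hcomm1, smul_neg, add_neg_cancel]
    simp
  have h1 : exp (Δ • 𝒜) (φ Δ) = exp (Δ • 𝒜) (w 0) := by rw [hconst, hφ0]
  have h2 : φ Δ = exp (Δ • (-𝒜)) (w Δ) := rfl
  rw [← h1, h2, ← ContinuousLinearMap.mul_apply (exp (Δ • 𝒜)) (exp (Δ • (-𝒜))) (w Δ),
    hinv, ContinuousLinearMap.one_apply]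

/-- The zero-order-hold discretisation is exact: if `h` solves the linear
state-space ODE `h' t = A · h t + B · u` with `h 0 = h₀` and `A` is invertible, then for every
`Δ`, `h Δ = exp (Δ • A) · h₀ + (A⁻¹ * (exp (Δ • A) - 1) * B) · u`. -/
theorem ssm_solution_eq_zoh_update (n m : ℕ) (A : Matrix (Fin n) (Fin n) ℝ) (hA : IsUnit A)
    (B : Matrix (Fin n) (Fin m) ℝ) (u : EuclideanSpace ℝ (Fin m))
    (h₀ : EuclideanSpace ℝ (Fin n)) (h : ℝ → EuclideanSpace ℝ (Fin n)) (h0 : h 0 = h₀)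
    (hode : ∀ t : ℝ,
      HasDerivAt h (Matrix.toEuclideanLin A (h t) + Matrix.toEuclideanLin B u) t) :
    ∀ Δ : ℝ, h Δ =
      Matrix.toEuclideanLin (NormedSpace.exp (Δ • A)) h₀ +
        Matrix.toEuclideanLin (A⁻¹ * (NormedSpace.exp (Δ • A) - 1) * B) u := by
  intro Δ
  classical
  set 𝒜 : EuclideanSpace ℝ (Fin n) →L[ℝ] EuclideanSpace ℝ (Fin n) :=
    Matrix.toEuclideanCLM (𝕜 := ℝ) A with h𝒜
  set c : EuclideanSpace ℝ (Fin n) := Matrix.toEuclideanLin (A⁻¹ * B) u with hc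
  have hdet : IsUnit A.det := A.isUnit_iff_isUnit_det.mp hA
  have hA1 : A * A⁻¹ = 1 := Matrix.mul_nonsing_inv A hdet
  have hA1' : A⁻¹ * A = 1 := Matrix.nonsing_inv_mul A hdet
  have hAc : Matrix.toEuclideanLin A c = Matrix.toEuclideanLin B u := by
    rw [hc, ← toEuclideanLin_mul_apply', ← Matrix.mul_assoc, hA1, Matrix.one_mul]
  -- the shifted solution
  set w : ℝ → EuclideanSpace ℝ (Fin n) := fun t => h t + c with hw
  have hw' : ∀ t, HasDerivAt w (𝒜 (w t)) t := by
    intro t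
    have hd := (hode t).add_const c
    have heq : 𝒜 (w t) = Matrix.toEuclideanLin A (h t) + Matrix.toEuclideanLin B u := by
      rw [h𝒜, toEuclideanCLM_apply_eq]
      show Matrix.toEuclideanLin A (h t + c) = _
      rw [map_add, hAc]
    rw [heq]
    exact hd
  have hwΔ : w Δ = exp (Δ • 𝒜) (w 0) := linear_ode_sol 𝒜 w hw' Δ
  -- continuity of the CLM map, used for `map_exp`
  have hcont : Continuous (Matrix.toEuclideanCLM (n := Fin n) (𝕜 := ℝ)) :=
    (AddMonoidHomClass.isometry_of_norm (Matrix.toEuclideanCLM (n := Fin n) (𝕜 := ℝ)) fun x => (Matrix.cstar_norm_def x).symm).continuous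
  have hmap : Matrix.toEuclideanCLM (𝕜 := ℝ) (exp (Δ • A)) = exp (Δ • 𝒜) := by
    let +nondep : NormedAlgebra ℚ (Matrix (Fin n) (Fin n) ℝ) := .restrictScalars ℚ ℝ _
    rw [map_exp _ hcont, map_smul]
  have hexpApp : ∀ v : EuclideanSpace ℝ (Fin n),
      Matrix.toEuclideanLin (exp (Δ • A)) v = exp (Δ • 𝒜) v := by
    intro v
    rw [← toEuclideanCLM_apply_eq, hmap]
  -- assemble
  have hhΔ : h Δ = exp (Δ • 𝒜) h₀ + (exp (Δ • 𝒜) c - c) := by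
    have hEq : h Δ = w Δ - c := by simp [hw]
    have h3 : w 0 = h₀ + c := by rw [hw]; simp [h0]
    rw [hEq, hwΔ, h3, map_add]
    abel
  have hcommInv : Commute A⁻¹ (exp (Δ • A) - 1) := by
    have h1 : Commute A⁻¹ A := by
      unfold Commute SemiconjBy
      rw [hA1, hA1']
    exact ((h1.smul_right Δ).exp_right).sub_right (Commute.one_right _)
  have hrw : A⁻¹ * (exp (Δ • A) - 1) * B = (exp (Δ • A) - 1) * (A⁻¹ * B) := by
    rw [hcommInv.eq, Matrix.mul_assoc]
  rw [hhΔ, hrw, toEuclideanLin_mul_apply', ← hc, hexpApp]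
  congr 1
  rw [map_sub, LinearMap.sub_apply, hexpApp]
  congr 1
  simp [Matrix.toEuclideanLin_apply]
end
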